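/- Let 0 < p < 1 and φ₁, φ₂ ∈ ℝ. With ϱ = |(1 − e^{iφ₁} − e^{iφ₂}) − (1 − e^{iφ₁})(1 − e^{iφ₂})p|² and ς = |−e^{iφ₂} − (1 − e^{iφ₁})(1 − e^{iφ₂})p|², the quantities (1 − ϱ) and (1 − ς) have opposite signs or are both zero; equivalently, (1 − ϱ)·(1 − ς) ≤ 0. -/

import Mathlib

open Complex Real

theorem stmt_2 (p φ₁ φ₂ : ℝ) (hp0 : 0 < p) (hp1 : p < 1) :
    (1 - ‖(1 - Complex.exp (Complex.I * φ₁) - Complex.exp (Complex.I * φ₂)) -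
          (1 - Complex.exp (Complex.I * φ₁)) * (1 - Complex.exp (Complex.I * φ₂)) * (p : ℂ)‖ ^ 2)
      * (1 - ‖-(Complex.exp (Complex.I * φ₂)) -
          (1 - Complex.exp (Complex.I * φ₁)) * (1 - Complex.exp (Complex.I * φ₂)) * (p : ℂ)‖ ^ 2)
      ≤ 0 := by
  set z₁ := Complex.exp (Complex.I * φ₁) with hz1
  set z₂ := Complex.exp (Complex.I * φ₂) with hz2
  have hz1n : z₁ ≠ 0 := Complex.exp_ne_zero _
  have hz2n : z₂ ≠ 0 := Complex.exp_ne_zero _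
  have habs1 : ‖z₁‖ = 1 := by
    rw [hz1, Complex.norm_exp]; simp
  have habs2 : ‖z₂‖ = 1 := by
    rw [hz2, Complex.norm_exp]; simp
  have hc1 : (starRingEnd ℂ) z₁ = z₁⁻¹ := by
    rw [Complex.inv_def, Complex.normSq_eq_norm_sq, habs1]; simp
  have hc2 : (starRingEnd ℂ) z₂ = z₂⁻¹ := by
    rw [Complex.inv_def, Complex.normSq_eq_norm_sq, habs2]; simp
  set a : ℂ := (1 - z₁ - z₂) - (1 - z₁) * (1 - z₂) * (p : ℂ) with ha
  set b : ℂ := -z₂ - (1 - z₁) * (1 - z₂) * (p : ℂ) with hb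
  have key : (p : ℂ) * (a * (starRingEnd ℂ) a) + (1 - (p : ℂ)) * (b * (starRingEnd ℂ) b) = 1 := by
    rw [ha, hb]
    simp only [map_sub, map_mul, map_one, map_neg, hc1, hc2, Complex.conj_ofReal]
    field_simp
    ring
  have key' : p * ‖a‖ ^ 2 + (1 - p) * ‖b‖ ^ 2 = 1 := by
    have h := congrArg Complex.re key
    rw [Complex.mul_conj, Complex.mul_conj] at h
    simp only [Complex.add_re, Complex.mul_re, Complex.sub_re, Complex.one_re,
      Complex.ofReal_re, Complex.ofReal_im, Complex.sub_im, Complex.one_im,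
      Complex.one_im] at h
    simp only [Complex.normSq_eq_norm_sq] at h
    simp at h
    linarith [h]
  nlinarith [key', sq_nonneg (1 - ‖b‖ ^ 2), hp0.le]
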